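/- Fix N ∈ ℕ, α, β ∈ (0,1) with α ≥ β, λ > 0, w_min < 0 and probability weighting functions W⁺, W⁻, and consider the price-constrained lottery problems P'(n⁻,n⁺) (the lottery problem P(n⁻,n⁺) with the additional constraint w⁻_1 ≥ w_min) with optimal values Π'(n⁻,n⁺). Suppose the pair (N⁻, N⁺) of nonnegative integers with N⁻ + N⁺ = N attains the maximum of Π'(n⁻,n⁺) over all nonnegative integer pairs with n⁻ + n⁺ = N, and suppose Π'* = Π'(N⁻, N⁺) > 0. Then every (w⁻, w⁺) that is a global maximizer of P'(N⁻, N⁺) satisfies w⁻_i = w_min for every i ∈ {1,…,N⁻}. -/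

import Mathlib

open Finset

/-- An inverse S-shaped function on `[0,1]`: strictly increasing, continuously
differentiable, with a derivative strictly decreasing then strictly increasing. -/
def InverseSShaped (W : ℝ → ℝ) : Prop :=
  StrictMonoOn W (Set.Icc (0 : ℝ) 1) ∧
  ContDiffOn ℝ 1 W (Set.Icc (0 : ℝ) 1) ∧
  ∃ x₀ ∈ Set.Icc (0 : ℝ) 1,
    StrictAntiOn (deriv W) (Set.Icc (0 : ℝ) x₀) ∧ StrictMonoOn (deriv W) (Set.Icc x₀ 1)

/-- A probability weighting function: inverse S-shaped with `W 0 = 0` and `W 1 = 1`. -/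
def IsPWF (W : ℝ → ℝ) : Prop :=
  InverseSShaped W ∧ W 0 = 0 ∧ W 1 = 1

/-- Gain decision weights: `h⁺_j = W⁺((n−j+1)/N) − W⁺((n−j)/N)` for `j = 1,…,n`. -/
noncomputable def gainW (W : ℝ → ℝ) (N n j : ℕ) : ℝ :=
  W (((n : ℝ) - j + 1) / N) - W (((n : ℝ) - j) / N)

/-- The transitional index
`J = min{ j ∈ {1,…,n} : j = n ∨ j·h⁺_{j+1} ≥ ∑_{j'≤j} h⁺_{j'} }`. -/
noncomputable def transIdx (W : ℝ → ℝ) (N n : ℕ) : ℕ :=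
  sInf {j : ℕ | 1 ≤ j ∧ j ≤ n ∧
    (j = n ∨ ∑ j' ∈ Finset.Icc 1 j, gainW W N n j' ≤ (j : ℝ) * gainW W N n (j + 1))}

/-- Loss decision weights: `h⁻_i = W⁻(i/N) − W⁻((i−1)/N)` for `i = 1,…,n⁻`. -/
noncomputable def lossW (W : ℝ → ℝ) (N i : ℕ) : ℝ :=
  W ((i : ℝ) / N) - W (((i : ℝ) - 1) / N)

/-- Feasibility for the loss subproblem: `y_1 ≥ y_2 ≥ … ≥ y_n ≥ 0` and `∑ h⁻_i y_i = v`. -/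
def LossFeasible (W : ℝ → ℝ) (N n : ℕ) (v : ℝ) (y : ℕ → ℝ) : Prop :=
  0 ≤ y n ∧ (∀ i ∈ Finset.Icc 1 (n - 1), y (i + 1) ≤ y i) ∧
  ∑ i ∈ Finset.Icc 1 n, lossW W N i * y i = v

/-- The CPT value function: `U(w) = w^α` for `w ≥ 0` and `U(w) = −λ·(−w)^β` for `w < 0`. -/
noncomputable def cptU (α β lam : ℝ) (w : ℝ) : ℝ :=
  if 0 ≤ w then w ^ α else -lam * (-w) ^ β

/-- Feasibility for the lottery problem `P(n⁻,n⁺)`: nonnegative CPT expected utility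
(individual rationality), `0 ≤ w⁺_1 ≤ … ≤ w⁺_{n⁺}`, and `w⁻_1 ≤ … ≤ w⁻_{n⁻} ≤ 0`. -/
def LotFeasible (Wm Wp : ℝ → ℝ) (N : ℕ) (α β lam : ℝ) (nm np : ℕ)
    (wm wp : ℕ → ℝ) : Prop :=
  0 ≤ ∑ i ∈ Finset.Icc 1 nm, lossW Wm N i * cptU α β lam (wm i) +
      ∑ j ∈ Finset.Icc 1 np, gainW Wp N np j * cptU α β lam (wp j) ∧
  (1 ≤ np → 0 ≤ wp 1) ∧ (∀ j ∈ Finset.Icc 1 (np - 1), wp j ≤ wp (j + 1)) ∧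
  (1 ≤ nm → wm nm ≤ 0) ∧ (∀ i ∈ Finset.Icc 1 (nm - 1), wm i ≤ wm (i + 1))

/-- The seller's profit: `∑_i (−w⁻_i) − ∑_j w⁺_j`. -/
def LotObj (nm np : ℕ) (wm wp : ℕ → ℝ) : ℝ :=
  ∑ i ∈ Finset.Icc 1 nm, (-(wm i)) - ∑ j ∈ Finset.Icc 1 np, wp j

/-- Feasibility for the price-constrained lottery problem `P'(n⁻,n⁺)`: feasibility for
`P(n⁻,n⁺)` together with the fixed-price constraint `w⁻_1 ≥ w_min`. -/
def PLotFeasible (Wm Wp : ℝ → ℝ) (N : ℕ) (α β lam wmin : ℝ) (nm np : ℕ)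
    (wm wp : ℕ → ℝ) : Prop :=
  LotFeasible Wm Wp N α β lam nm np wm wp ∧ (1 ≤ nm → wmin ≤ wm 1)

section AuxLemmas

open Real

private lemma strictConcave_aux {R L a b : ℝ} (hR : 0 ≤ R) (hL : 0 < L)
    (ha0 : 0 < a) (ha1 : a < 1) (hb0 : 0 < b) (hba : b ≤ a)
    (hstrict : 0 < R ∨ b < a) :
    StrictConcaveOn ℝ (Set.Ici (0:ℝ)) (fun V : ℝ => (R + L * V ^ b) ^ (1/a)) := by
  have hb1 : b < 1 := lt_of_le_of_lt hba ha1
  set g1 : ℝ → ℝ := fun V => (L * b / a) * ((R + L * V ^ b) ^ (1/a - 1) * V ^ (b - 1)) with hg1def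
  set g2 : ℝ → ℝ := fun V => (L * b / a) * ((R + L * V ^ b) ^ (1/a - 2) * V ^ (b - 2) *
      ((b - 1) * R + L * V ^ b * ((b - a)/a))) with hg2def
  have hu : ∀ V : ℝ, 0 < V → 0 < R + L * V ^ b := fun V hV =>
    add_pos_of_nonneg_of_pos hR (mul_pos hL (Real.rpow_pos_of_pos hV b))
  have hderiv1 : ∀ V : ℝ, 0 < V →
      HasDerivAt (fun V : ℝ => (R + L * V ^ b) ^ (1/a)) (g1 V) V := by
    intro V hV
    have h1 : HasDerivAt (fun x : ℝ => x ^ b) (b * V ^ (b - 1)) V :=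
      Real.hasDerivAt_rpow_const (Or.inl hV.ne')
    have h2 : HasDerivAt (fun x : ℝ => R + L * x ^ b) (L * (b * V ^ (b - 1))) V := by
      simpa using (h1.const_mul L).const_add R
    have h3 : HasDerivAt (fun y : ℝ => y ^ (1/a))
        ((1/a) * (R + L * V ^ b) ^ (1/a - 1)) (R + L * V ^ b) :=
      Real.hasDerivAt_rpow_const (Or.inl (hu V hV).ne')
    have h4 := h3.comp V h2
    simp only [Function.comp_def] at h4
    refine h4.congr_deriv ?_
    simp only [hg1def]; ring
  have hderiv2 : ∀ V : ℝ, 0 < V → HasDerivAt g1 (g2 V) V := by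
    intro V hV
    have huV := hu V hV
    have h1 : HasDerivAt (fun x : ℝ => x ^ b) (b * V ^ (b - 1)) V :=
      Real.hasDerivAt_rpow_const (Or.inl hV.ne')
    have h2 : HasDerivAt (fun x : ℝ => R + L * x ^ b) (L * (b * V ^ (b - 1))) V := by
      simpa using (h1.const_mul L).const_add R
    have h3 : HasDerivAt (fun y : ℝ => y ^ (1/a - 1))
        ((1/a - 1) * (R + L * V ^ b) ^ (1/a - 1 - 1)) (R + L * V ^ b) :=
      Real.hasDerivAt_rpow_const (Or.inl huV.ne')
    have hA := h3.comp V h2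
    simp only [Function.comp_def] at hA
    have hB : HasDerivAt (fun x : ℝ => x ^ (b - 1)) ((b - 1) * V ^ (b - 1 - 1)) V :=
      Real.hasDerivAt_rpow_const (Or.inl hV.ne')
    have hprod := (hA.mul hB).const_mul (L * b / a)
    refine hprod.congr_deriv ?_
    symm
    have e1 : (R + L * V ^ b) ^ (1/a - 1) = (R + L * V ^ b) ^ (1/a - 2) * (R + L * V ^ b) := by
      rw [show (1/a - 1 : ℝ) = (1/a - 2) + 1 by ring, Real.rpow_add huV, Real.rpow_one]
    have e2 : V ^ (b - 1) * V ^ (b - 1) = V ^ (b - 2) * V ^ b := by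
      rw [← Real.rpow_add hV, ← Real.rpow_add hV]; ring_nf
    simp only [Function.comp_apply, hg2def]
    rw [show (1/a - 1 - 1 : ℝ) = 1/a - 2 by ring, show (b - 1 - 1 : ℝ) = b - 2 by ring, e1]
    have e3 : a * a⁻¹ = 1 := mul_inv_cancel₀ ha0.ne'
    linear_combination ((-(L * b / a)) * ((R + L * V ^ b) ^ (1/a - 2 : ℝ)) * (1/a - 1) * L * b) * e2
      + ((-(L^2 * b * (1/a))) * ((R + L * V ^ b) ^ (1/a - 2 : ℝ)) * V ^ (b - 2 : ℝ) * V ^ (b : ℝ)) * e3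
  have hcont : ContinuousOn (fun V : ℝ => (R + L * V ^ b) ^ (1/a)) (Set.Ici 0) := by
    apply ContinuousOn.rpow_const
    · exact continuousOn_const.add (continuousOn_const.mul
        (continuousOn_id.rpow_const (fun x _ => Or.inr hb0.le)))
    · exact fun x _ => Or.inr (by positivity)
  apply strictConcaveOn_of_deriv2_neg (convex_Ici 0) hcont
  intro x hx
  rw [interior_Ici] at hx
  have hx0 : 0 < x := hx
  have hstep : deriv^[2] (fun V : ℝ => (R + L * V ^ b) ^ (1/a)) x = g2 x := by
    have hd1 : ∀ y ∈ Set.Ioi (0:ℝ), deriv (fun V : ℝ => (R + L * V ^ b) ^ (1/a)) y = g1 y :=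
      fun y hy => (hderiv1 y hy).deriv
    have hkey : deriv (deriv (fun V : ℝ => (R + L * V ^ b) ^ (1/a))) x = deriv g1 x :=
      Filter.EventuallyEq.deriv_eq (Filter.eventuallyEq_of_mem (Ioi_mem_nhds hx0) hd1)
    simp only [Function.iterate_succ, Function.iterate_zero, Function.comp_apply, id_eq]
    exact hkey.trans ((hderiv2 x hx0).deriv)
  rw [hstep]
  have c1 : 0 < L * b / a := by positivity
  have c2 : (0:ℝ) < (R + L * x ^ b) ^ (1/a - 2) := Real.rpow_pos_of_pos (hu x hx0) _
  have c3 : (0:ℝ) < x ^ (b - 2) := Real.rpow_pos_of_pos hx0 _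
  have hxb : (0:ℝ) < x ^ b := Real.rpow_pos_of_pos hx0 _
  have c4 : (b - 1) * R + L * x ^ b * ((b - a)/a) < 0 := by
    rcases hstrict with hRpos | hblt
    · have t1 : (b - 1) * R < 0 := mul_neg_of_neg_of_pos (by linarith) hRpos
      have t2 : L * x ^ b * ((b - a)/a) ≤ 0 := by
        apply mul_nonpos_of_nonneg_of_nonpos (by positivity)
        apply div_nonpos_of_nonpos_of_nonneg <;> linarith
      linarith
    · have t1 : (b - 1) * R ≤ 0 := mul_nonpos_of_nonpos_of_nonneg (by linarith) hR
      have t2 : L * x ^ b * ((b - a)/a) < 0 := by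
        apply mul_neg_of_pos_of_neg (by positivity)
        apply div_neg_of_neg_of_pos <;> linarith
      linarith
  simp only [hg2def]
  exact mul_neg_of_pos_of_neg c1 (mul_neg_of_pos_of_neg (mul_pos c2 c3) c4)

variable {α β lam : ℝ}

private lemma cptU_of_nonneg {w : ℝ} (hw : 0 ≤ w) : cptU α β lam w = w ^ α := if_pos hw

private lemma cptU_of_neg_arg (hα : 0 < α) (hβ : 0 < β) {V : ℝ} (hV : 0 ≤ V) :
    cptU α β lam (-V) = -(lam * V ^ β) := by
  rcases eq_or_lt_of_le hV with h | h
  · simp [cptU, ← h, Real.zero_rpow hα.ne', Real.zero_rpow hβ.ne']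
  · rw [cptU, if_neg (by linarith), neg_neg]; ring

private lemma cptU_nonneg {w : ℝ} (hw : 0 ≤ w) : 0 ≤ cptU α β lam w := by
  rw [cptU_of_nonneg hw]; exact Real.rpow_nonneg hw α

private lemma cptU_nonpos (hα : 0 < α) (hlam : 0 < lam) {w : ℝ} (hw : w ≤ 0) :
    cptU α β lam w ≤ 0 := by
  rcases eq_or_lt_of_le hw with h | h
  · rw [h, cptU_of_nonneg le_rfl, Real.zero_rpow hα.ne']
  · rw [cptU, if_neg (by linarith)]
    have : (0:ℝ) < (-w) ^ β := Real.rpow_pos_of_pos (by linarith) β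
    nlinarith

private lemma cptU_neg (hlam : 0 < lam) {w : ℝ} (hw : w < 0) : cptU α β lam w < 0 := by
  rw [cptU, if_neg (by linarith)]
  have : (0:ℝ) < (-w) ^ β := Real.rpow_pos_of_pos (by linarith) β
  nlinarith

private lemma cptU_zero (hα : 0 < α) : cptU α β lam 0 = 0 := by
  rw [cptU_of_nonneg le_rfl, Real.zero_rpow hα.ne']

private lemma cptU_smul {s w : ℝ} (hs : 0 ≤ s) (hw : 0 ≤ w) :
    cptU α β lam (s * w) = s ^ α * cptU α β lam w := by
  rw [cptU_of_nonneg (mul_nonneg hs hw), cptU_of_nonneg hw, Real.mul_rpow hs hw]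

private lemma chain_mono {f : ℕ → ℝ} {n : ℕ} (h : ∀ i ∈ Finset.Icc 1 (n-1), f i ≤ f (i+1)) :
    ∀ i j, 1 ≤ i → i ≤ j → j ≤ n → f i ≤ f j := by
  intro i j h1 hij hjn
  induction j with
  | zero => omega
  | succ k ih =>
    rcases Nat.eq_or_lt_of_le hij with he | hlt
    · rw [he]
    · exact le_trans (ih (by omega) (by omega))
        (h k (Finset.mem_Icc.mpr (by omega)))

private lemma lossW_pos {W : ℝ → ℝ} (hW : IsPWF W) {N i : ℕ} (hN : 0 < N)
    (h1 : 1 ≤ i) (h2 : i ≤ N) : 0 < lossW W N i := by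
  have hNr : (0:ℝ) < N := by exact_mod_cast hN
  have hi1 : (1:ℝ) ≤ (i:ℝ) := by exact_mod_cast h1
  have hiN : (i:ℝ) ≤ (N:ℝ) := by exact_mod_cast h2
  have hx : ((i:ℝ) - 1) / N ∈ Set.Icc (0:ℝ) 1 := by
    constructor
    · apply div_nonneg (by linarith) hNr.le
    · rw [div_le_one hNr]; linarith
  have hy : (i:ℝ) / N ∈ Set.Icc (0:ℝ) 1 := by
    constructor
    · apply div_nonneg (by linarith) hNr.le
    · rw [div_le_one hNr]; linarith
  apply sub_pos.mpr
  apply hW.1.1 hx hy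
  apply div_lt_div_of_pos_right (by linarith) hNr

private lemma gainW_pos {W : ℝ → ℝ} (hW : IsPWF W) {N n j : ℕ} (hN : 0 < N)
    (h1 : 1 ≤ j) (h2 : j ≤ n) (h3 : n ≤ N) : 0 < gainW W N n j := by
  have hNr : (0:ℝ) < N := by exact_mod_cast hN
  have hj1 : (1:ℝ) ≤ (j:ℝ) := by exact_mod_cast h1
  have hjn : (j:ℝ) ≤ (n:ℝ) := by exact_mod_cast h2
  have hnN : (n:ℝ) ≤ (N:ℝ) := by exact_mod_cast h3
  have hx : ((n:ℝ) - j) / N ∈ Set.Icc (0:ℝ) 1 := by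
    constructor
    · apply div_nonneg (by linarith) hNr.le
    · rw [div_le_one hNr]; linarith
  have hy : ((n:ℝ) - j + 1) / N ∈ Set.Icc (0:ℝ) 1 := by
    constructor
    · apply div_nonneg (by linarith) hNr.le
    · rw [div_le_one hNr]; linarith
  apply sub_pos.mpr
  apply hW.1.1 hx hy
  apply div_lt_div_of_pos_right (by linarith) hNr

private lemma gainW_shift (W : ℝ → ℝ) (N n j : ℕ) :
    gainW W N (n+1) (j+1) = gainW W N n j := by
  unfold gainW
  push_cast
  ring_nf

end AuxLemmas

section CaseA

private lemma lottery_caseA (Wm Wp : ℝ → ℝ) (N : ℕ) (α β lam wmin : ℝ)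
    (Nm Np : ℕ) (Pistar : ℝ)
    (hWm : IsPWF Wm) (hWp : IsPWF Wp)
    (hα0 : 0 < α) (hα1 : α < 1) (hβ0 : 0 < β) (hlam : 0 < lam)
    (hsum : Nm + Np = N)
    (hmax : ∀ nm np : ℕ, nm + np = N → ∀ wm wp : ℕ → ℝ,
        PLotFeasible Wm Wp N α β lam wmin nm np wm wp → LotObj nm np wm wp ≤ Pistar)
    (hpos : 0 < Pistar)
    (wm wp : ℕ → ℝ) (hfeas : PLotFeasible Wm Wp N α β lam wmin Nm Np wm wp)
    (hobj : LotObj Nm Np wm wp = Pistar)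
    (hNm1 : 1 ≤ Nm)
    (htop : wm Nm = 0) : False := by
  classical
  obtain ⟨⟨hIR, hwp1, hwpmono, hwmtop, hwmmono⟩, hwm1⟩ := hfeas
  simp only [LotObj] at hobj
  have hNpos : 0 < N := by omega
  have hwmchain := chain_mono hwmmono
  have hwpchain := chain_mono hwpmono
  have hwmub : ∀ i, 1 ≤ i → i ≤ Nm → wm i ≤ 0 :=
    fun i h1 h2 => (hwmchain i Nm h1 h2 le_rfl).trans_eq htop
  have hwpnn : ∀ j, 1 ≤ j → j ≤ Np → 0 ≤ wp j := by
    intro j h1 h2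
    exact le_trans (hwp1 (by omega)) (hwpchain 1 j le_rfl h1 h2)
  have hlw : ∀ i, 1 ≤ i → i ≤ Nm → 0 < lossW Wm N i := fun i h1 h2 =>
    lossW_pos hWm hNpos h1 (by omega)
  have hgw : ∀ j, 1 ≤ j → j ≤ Np → 0 < gainW Wp N Np j := fun j h1 h2 =>
    gainW_pos hWp hNpos h1 h2 (by omega)
  set L := ∑ i ∈ Icc 1 Nm, lossW Wm N i * cptU α β lam (wm i) with hLdef
  set G := ∑ j ∈ Icc 1 Np, gainW Wp N Np j * cptU α β lam (wp j) with hGdef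
  set B := ∑ j ∈ Icc 1 Np, wp j with hBdef
  set C := ∑ i ∈ Icc 1 Nm, (-(wm i)) with hCdef
  clear_value L G B C
  have hBnn : 0 ≤ B := by
    rw [hBdef]
    exact Finset.sum_nonneg fun j hj =>
      hwpnn j (Finset.mem_Icc.mp hj).1 (Finset.mem_Icc.mp hj).2
  have hCpos : 0 < C := by linarith
  have hexneg : ∃ i₁, (1 ≤ i₁ ∧ i₁ ≤ Nm) ∧ wm i₁ < 0 := by
    by_contra hno
    push_neg at hno
    have hCnp : C ≤ 0 := by
      rw [hCdef]
      apply Finset.sum_nonpos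
      intro i hi
      rw [Finset.mem_Icc] at hi
      have := hno i ⟨hi.1, hi.2⟩
      linarith
    linarith
  obtain ⟨i₁, ⟨hi₁1, hi₁Nm⟩, hi₁neg⟩ := hexneg
  have hLterms : ∀ i ∈ Icc 1 Nm, lossW Wm N i * cptU α β lam (wm i) ≤ 0 := by
    intro i hi; rw [Finset.mem_Icc] at hi
    exact mul_nonpos_of_nonneg_of_nonpos (hlw i hi.1 hi.2).le
      (cptU_nonpos hα0 hlam (hwmub i hi.1 hi.2))
  have hLneg : L < 0 := by
    have h1 : lossW Wm N i₁ * cptU α β lam (wm i₁) < 0 :=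
      mul_neg_of_pos_of_neg (hlw i₁ hi₁1 hi₁Nm) (cptU_neg hlam hi₁neg)
    have h2 : L ≤ 0 := by rw [hLdef]; exact Finset.sum_nonpos hLterms
    rcases h2.lt_or_eq with h | h
    · exact h
    · exfalso
      rw [hLdef] at h
      have := (Finset.sum_eq_zero_iff_of_nonpos hLterms).mp h i₁
        (Finset.mem_Icc.mpr ⟨hi₁1, hi₁Nm⟩)
      linarith
  have hGpos : 0 < G := by linarith
  have hexj : ∃ j, (1 ≤ j ∧ j ≤ Np) ∧ 0 < wp j := by
    by_contra hno
    push_neg at hno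
    have : G = 0 := by
      rw [hGdef]
      apply Finset.sum_eq_zero
      intro j hj
      rw [Finset.mem_Icc] at hj
      have hz : wp j = 0 := le_antisymm (hno j ⟨hj.1, hj.2⟩) (hwpnn j hj.1 hj.2)
      rw [hz, cptU_zero hα0, mul_zero]
    linarith
  obtain ⟨j₀, ⟨⟨hj₀1, hj₀Np⟩, hj₀pos⟩, hj₀min⟩ :
      ∃ j, ((1 ≤ j ∧ j ≤ Np) ∧ 0 < wp j) ∧ ∀ j' < j, ¬((1 ≤ j' ∧ j' ≤ Np) ∧ 0 < wp j') :=
    ⟨Nat.find hexj, Nat.find_spec hexj, fun j' h => Nat.find_min hexj h⟩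
  have hlead : ∀ j, 1 ≤ j → j < j₀ → wp j = 0 := by
    intro j h1 hj
    have hmin := hj₀min j hj
    push_neg at hmin
    exact le_antisymm (hmin ⟨h1, by omega⟩) (hwpnn j h1 (by omega))
  set w := gainW Wp N (Np+1) j₀ with hwdef
  have hw : 0 < w := gainW_pos hWp hNpos hj₀1 (by omega) (by omega)
  have hBpos : 0 < B := by
    rw [hBdef]
    exact lt_of_lt_of_le hj₀pos (Finset.single_le_sum (f := fun j => wp j)
      (fun j hj => hwpnn j (Finset.mem_Icc.mp hj).1 (Finset.mem_Icc.mp hj).2)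
      (Finset.mem_Icc.mpr ⟨hj₀1, hj₀Np⟩))
  set T := B * w / (G + w) with hTdef
  have hT : 0 < T := div_pos (mul_pos hBpos hw) (by linarith)
  set ε := min (min 1 (wp j₀)) (T ^ (1/(1-α)) / 2) with hεdef
  have hεpos : 0 < ε := by
    apply lt_min (lt_min one_pos hj₀pos)
    exact div_pos (Real.rpow_pos_of_pos hT _) two_pos
  have hε1 : ε ≤ 1 := le_trans (min_le_left _ _) (min_le_left _ _)
  have hεwp : ε ≤ wp j₀ := le_trans (min_le_left _ _) (min_le_right _ _)
  have hεT : ε ^ (1-α) < T := by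
    have h2 : ε ≤ T ^ (1/(1-α)) / 2 := min_le_right _ _
    have hTp : 0 < T ^ (1/(1-α)) := Real.rpow_pos_of_pos hT _
    calc ε ^ (1-α) ≤ (T ^ (1/(1-α)) / 2) ^ (1-α) :=
          Real.rpow_le_rpow hεpos.le h2 (by linarith)
      _ < (T ^ (1/(1-α))) ^ (1-α) :=
          Real.rpow_lt_rpow (by linarith [Real.rpow_pos_of_pos hT (1/(1-α))])
            (by linarith [Real.rpow_pos_of_pos hT (1/(1-α))]) (by linarith)
      _ = T := by
          rw [← Real.rpow_mul hT.le, one_div,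
            inv_mul_cancel₀ (by linarith : (1:ℝ)-α ≠ 0), Real.rpow_one]
  have hεα : 0 < ε ^ α := Real.rpow_pos_of_pos hεpos α
  have hden : 0 < G + w * ε ^ α := by
    have := mul_pos hw hεα
    linarith
  set s := (G / (G + w * ε ^ α)) ^ (1/α) with hsdef
  have hfrac01 : 0 < G / (G + w * ε ^ α) := div_pos hGpos hden
  have hfrac1 : G / (G + w * ε ^ α) ≤ 1 := by
    rw [div_le_one hden]; nlinarith
  have hs0 : 0 < s := Real.rpow_pos_of_pos hfrac01 _
  have hs1 : s ≤ 1 := Real.rpow_le_one hfrac01.le hfrac1 (one_div_pos.mpr hα0).le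
  have hsa : s ^ α = G / (G + w * ε ^ α) := by
    rw [hsdef, ← Real.rpow_mul hfrac01.le, one_div, inv_mul_cancel₀ hα0.ne', Real.rpow_one]
  clear_value w T ε s
  set wp' : ℕ → ℝ := fun j => if j < j₀ then 0 else if j = j₀ then s * ε else s * wp (j-1)
    with hwp'def
  have hsum_split : ∀ F : ℕ → ℝ, ∑ j ∈ Icc 1 (Np+1), F j
      = ((∑ j ∈ Icc 1 (j₀-1), F j) + F j₀) + ∑ j ∈ Icc j₀ Np, F (j+1) := by
    intro F
    have h1 : ∑ j ∈ Icc 1 j₀, F j = (∑ j ∈ Icc 1 (j₀-1), F j) + F j₀ := by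
      rw [show j₀ = (j₀-1)+1 from by omega, Finset.sum_Icc_succ_top (by omega)]
      simp
    have h3 : ∑ j ∈ Icc (j₀+1) (Np+1), F j = ∑ j ∈ Icc j₀ Np, F (j+1) := by
      rw [← Finset.map_add_right_Icc j₀ Np 1, Finset.sum_map]
      simp [addRightEmbedding_apply]
    have h2 : (∑ j ∈ Icc 1 j₀, F j) + ∑ j ∈ Icc (j₀+1) (Np+1), F j = ∑ j ∈ Icc 1 (Np+1), F j := by
      rw [← Finset.Ico_add_one_right_eq_Icc, ← Finset.Ico_add_one_right_eq_Icc, ← Finset.Ico_add_one_right_eq_Icc]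
      exact Finset.sum_Ico_consecutive F (by omega) (by omega)
    rw [← h2, h1, h3]
  have hgain_tail : ∀ Fg : ℕ → ℝ, (∀ j, 1 ≤ j → j < j₀ → Fg j = 0) →
      ∑ j ∈ Icc 1 Np, Fg j = ∑ j ∈ Icc j₀ Np, Fg j := by
    intro Fg hz
    rw [← Finset.Ico_add_one_right_eq_Icc, ← Finset.Ico_add_one_right_eq_Icc,
      ← Finset.sum_Ico_consecutive Fg (show 1 ≤ j₀ by omega) (show j₀ ≤ Np + 1 by omega)]
    have hzz : ∑ j ∈ Finset.Ico 1 j₀, Fg j = 0 :=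
      Finset.sum_eq_zero fun j hj => by
        rw [Finset.mem_Ico] at hj
        exact hz j hj.1 hj.2
    rw [hzz, zero_add]
  have ht_lead : ∀ j, j < j₀ → wp' j = 0 := by
    intro j hj
    simp only [hwp'def]
    rw [if_pos hj]
  have ht_mid : wp' j₀ = s * ε := by
    simp only [hwp'def]
    rw [if_neg (by omega)]
    simp
  have ht_tail : ∀ j, j₀ ≤ j → wp' (j+1) = s * wp j := by
    intro j hj
    simp only [hwp'def]
    rw [if_neg (by omega), if_neg (by omega)]
    norm_num
  have hIRnew : ∑ j ∈ Icc 1 (Np+1), gainW Wp N (Np+1) j * cptU α β lam (wp' j) = G := by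
    rw [hsum_split]
    have t1 : ∑ j ∈ Icc 1 (j₀-1), gainW Wp N (Np+1) j * cptU α β lam (wp' j) = 0 :=
      Finset.sum_eq_zero fun j hj => by
        rw [Finset.mem_Icc] at hj
        rw [ht_lead j (by omega), cptU_zero hα0, mul_zero]
    have t3 : ∑ j ∈ Icc j₀ Np, gainW Wp N (Np+1) (j+1) * cptU α β lam (wp' (j+1))
        = s ^ α * ∑ j ∈ Icc j₀ Np, gainW Wp N Np j * cptU α β lam (wp j) := by
      rw [Finset.mul_sum]
      apply Finset.sum_congr rfl
      intro j hj
      rw [Finset.mem_Icc] at hj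
      rw [ht_tail j hj.1, gainW_shift, cptU_smul hs0.le (hwpnn j (by omega) hj.2)]
      ring
    have t4 : ∑ j ∈ Icc j₀ Np, gainW Wp N Np j * cptU α β lam (wp j) = G := by
      rw [hGdef]
      symm
      apply hgain_tail
      intro j h1 h2
      rw [hlead j h1 h2, cptU_zero hα0, mul_zero]
    rw [t1, t3, t4, ht_mid, cptU_smul hs0.le hεpos.le, cptU_of_nonneg hεpos.le, ← hwdef, hsa]
    field_simp
    ring
  have hobjg : ∑ j ∈ Icc 1 (Np+1), wp' j = s * ε + s * B := by
    rw [hsum_split]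
    have t1 : ∑ j ∈ Icc 1 (j₀-1), wp' j = 0 :=
      Finset.sum_eq_zero fun j hj => by
        rw [Finset.mem_Icc] at hj
        exact ht_lead j (by omega)
    have t3 : ∑ j ∈ Icc j₀ Np, wp' (j+1) = s * ∑ j ∈ Icc j₀ Np, wp j := by
      rw [Finset.mul_sum]
      exact Finset.sum_congr rfl fun j hj => ht_tail j (Finset.mem_Icc.mp hj).1
    have t4 : ∑ j ∈ Icc j₀ Np, wp j = B := by
      rw [hBdef]
      symm
      exact hgain_tail _ (fun j h1 h2 => hlead j h1 h2)
    rw [t1, t3, t4, ht_mid]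
    ring
  have hlossobj : ∑ i ∈ Icc 1 (Nm-1), (-(wm i)) = C := by
    obtain ⟨Nm', rfl⟩ : ∃ m, Nm = m + 1 := ⟨Nm-1, by omega⟩
    simp only [Nat.add_sub_cancel]
    rw [hCdef, Finset.sum_Icc_succ_top (by omega), htop]
    simp
  have hlossIR : ∑ i ∈ Icc 1 (Nm-1), lossW Wm N i * cptU α β lam (wm i) = L := by
    obtain ⟨Nm', rfl⟩ : ∃ m, Nm = m + 1 := ⟨Nm-1, by omega⟩
    simp only [Nat.add_sub_cancel]
    rw [hLdef, Finset.sum_Icc_succ_top (by omega), htop, cptU_zero hα0]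
    simp
  have hfeas' : PLotFeasible Wm Wp N α β lam wmin (Nm-1) (Np+1) wm wp' := by
    refine ⟨⟨?_, ?_, ?_, ?_, ?_⟩, ?_⟩
    · rw [hlossIR, hIRnew]
      exact hIR
    · intro _
      by_cases h : 1 < j₀
      · rw [ht_lead 1 h]
      · have h1 : j₀ = 1 := by omega
        rw [← h1, ht_mid]
        exact mul_nonneg hs0.le hεpos.le
    · intro j hj
      rw [Finset.mem_Icc] at hj
      have hj2 : j ≤ Np := by omega
      by_cases c1 : j + 1 < j₀
      · rw [ht_lead j (by omega), ht_lead (j+1) c1]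
      · by_cases c2 : j + 1 = j₀
        · rw [ht_lead j (by omega)]
          have e1 : wp' (j+1) = s * ε := by rw [c2]; exact ht_mid
          rw [e1]
          exact mul_nonneg hs0.le hεpos.le
        · by_cases c3 : j = j₀
          · have e1 : wp' j = s * ε := by rw [c3]; exact ht_mid
            have e2 : wp' (j+1) = s * wp j := by
              rw [ht_tail j (by omega)]
            rw [e1, e2, c3]
            exact mul_le_mul_of_nonneg_left hεwp hs0.le
          · have hj₀lt : j₀ < j := by omega
            have e2 : wp' (j+1) = s * wp j := ht_tail j (by omega)
            obtain ⟨j', rfl⟩ : ∃ j', j = j' + 1 := ⟨j - 1, by omega⟩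
            have e1 : wp' (j'+1) = s * wp j' := ht_tail j' (by omega)
            rw [e1, e2]
            apply mul_le_mul_of_nonneg_left _ hs0.le
            exact hwpchain j' (j'+1) (by omega) (by omega) hj2
    · intro h
      exact hwmub (Nm-1) h (by omega)
    · intro i hi
      rw [Finset.mem_Icc] at hi
      exact hwmmono i (Finset.mem_Icc.mpr (by omega))
    · intro h
      exact hwm1 (by omega)
  have hval : LotObj (Nm-1) (Np+1) wm wp' = C - s * ε - s * B := by
    simp only [LotObj]
    rw [hlossobj, hobjg]
    ring
  have hgt : Pistar < LotObj (Nm-1) (Np+1) wm wp' := by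
    rw [hval]
    have k1 : s ≤ s ^ α := by
      have := Real.rpow_le_rpow_of_exponent_ge hs0 hs1 hα1.le
      rwa [Real.rpow_one] at this
    have k2 : (1 - s ^ α) * B = (w * ε ^ α / (G + w * ε ^ α)) * B := by
      rw [hsa]; field_simp
      ring
    have hεα1 : ε ^ α ≤ 1 := Real.rpow_le_one hεpos.le hε1 hα0.le
    have k3 : w * ε ^ α / (G + w) ≤ w * ε ^ α / (G + w * ε ^ α) := by
      apply div_le_div_of_nonneg_left (mul_nonneg hw.le hεα.le) hden
      have := mul_le_mul_of_nonneg_left hεα1 hw.le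
      linarith
    have k4 : ε < (w * ε ^ α / (G + w)) * B := by
      have he : ε ^ α * ε ^ (1-α) = ε := by
        rw [← Real.rpow_add hεpos, show α + (1-α) = 1 by ring, Real.rpow_one]
      have h5 : ε ^ α * ε ^ (1-α) < ε ^ α * T := mul_lt_mul_of_pos_left hεT hεα
      calc ε = ε ^ α * ε ^ (1-α) := he.symm
        _ < ε ^ α * T := h5
        _ = w * ε ^ α / (G + w) * B := by rw [hTdef]; ring
    have k5 : s * ε ≤ ε := by
      have := mul_le_mul_of_nonneg_right hs1 hεpos.le
      linarith
    have k6' : s * B ≤ s ^ α * B := mul_le_mul_of_nonneg_right k1 hBnn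
    have k7 : w * ε ^ α / (G + w) * B ≤ w * ε ^ α / (G + w * ε ^ α) * B :=
      mul_le_mul_of_nonneg_right k3 hBnn
    have k2'' : s ^ α * B + (w * ε ^ α / (G + w * ε ^ α)) * B = B := by
      rw [hsa]
      field_simp
    linarith [k5, k6', k4, k7, k2'']
  have := hmax (Nm-1) (Np+1) (by omega) wm wp' hfeas'
  linarith

end CaseA

section CaseB

private lemma lottery_caseB (Wm Wp : ℝ → ℝ) (N : ℕ) (α β lam wmin : ℝ)
    (Nm Np : ℕ) (Pistar : ℝ)
    (hWm : IsPWF Wm) (hWp : IsPWF Wp)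
    (hα0 : 0 < α) (hα1 : α < 1) (hβ0 : 0 < β) (hβ1 : β < 1) (hβα : β ≤ α)
    (hlam : 0 < lam) (hwmin : wmin < 0) (hsum : Nm + Np = N)
    (hopt : IsGreatest {S : ℝ | ∃ wm wp : ℕ → ℝ,
        PLotFeasible Wm Wp N α β lam wmin Nm Np wm wp ∧ S = LotObj Nm Np wm wp} Pistar)
    (hpos : 0 < Pistar)
    (wm wp : ℕ → ℝ) (hfeas : PLotFeasible Wm Wp N α β lam wmin Nm Np wm wp)
    (hobj : LotObj Nm Np wm wp = Pistar)
    (hNm1 : 1 ≤ Nm) (htop : wm Nm < 0)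
    (iw : ℕ) (hiw1 : 1 ≤ iw) (hiwNm : iw ≤ Nm) (hiwgt : wmin < wm iw) : False := by
  classical
  obtain ⟨⟨hIR, hwp1, hwpmono, hwmtop, hwmmono⟩, hwm1⟩ := hfeas
  simp only [LotObj] at hobj
  have hNpos : 0 < N := by omega
  have hwmchain := chain_mono hwmmono
  have hwpchain := chain_mono hwpmono
  have hwmneg : ∀ i, 1 ≤ i → i ≤ Nm → wm i < 0 :=
    fun i h1 h2 => lt_of_le_of_lt (hwmchain i Nm h1 h2 le_rfl) htop
  have hwmlb : ∀ i, 1 ≤ i → i ≤ Nm → wmin ≤ wm i :=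
    fun i h1 h2 => (hwm1 hNm1).trans (hwmchain 1 i le_rfl h1 h2)
  have hwpnn : ∀ j, 1 ≤ j → j ≤ Np → 0 ≤ wp j := by
    intro j h1 h2
    exact le_trans (hwp1 (by omega)) (hwpchain 1 j le_rfl h1 h2)
  have hlw : ∀ i, 1 ≤ i → i ≤ Nm → 0 < lossW Wm N i := fun i h1 h2 =>
    lossW_pos hWm hNpos h1 (by omega)
  set L := ∑ i ∈ Icc 1 Nm, lossW Wm N i * cptU α β lam (wm i) with hLdef
  set G := ∑ j ∈ Icc 1 Np, gainW Wp N Np j * cptU α β lam (wp j) with hGdef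
  set B := ∑ j ∈ Icc 1 Np, wp j with hBdef
  clear_value L G B
  have hLterms : ∀ i ∈ Icc 1 Nm, lossW Wm N i * cptU α β lam (wm i) ≤ 0 := by
    intro i hi; rw [Finset.mem_Icc] at hi
    exact mul_nonpos_of_nonneg_of_nonpos (hlw i hi.1 hi.2).le
      (cptU_nonpos hα0 hlam (hwmneg i hi.1 hi.2).le)
  have hLneg : L < 0 := by
    have h1 : lossW Wm N Nm * cptU α β lam (wm Nm) < 0 :=
      mul_neg_of_pos_of_neg (hlw Nm hNm1 le_rfl) (cptU_neg hlam htop)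
    have h2 : L ≤ 0 := by rw [hLdef]; exact Finset.sum_nonpos hLterms
    rcases h2.lt_or_eq with h | h
    · exact h
    · exfalso
      rw [hLdef] at h
      have := (Finset.sum_eq_zero_iff_of_nonpos hLterms).mp h Nm
        (Finset.mem_Icc.mpr ⟨hNm1, le_rfl⟩)
      linarith
  have hGpos : 0 < G := by linarith
  have hexj : ∃ j, (1 ≤ j ∧ j ≤ Np) ∧ 0 < wp j := by
    by_contra hno
    push_neg at hno
    have : G = 0 := by
      rw [hGdef]
      apply Finset.sum_eq_zero
      intro j hj
      rw [Finset.mem_Icc] at hj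
      have hz : wp j = 0 := le_antisymm (hno j ⟨hj.1, hj.2⟩) (hwpnn j hj.1 hj.2)
      rw [hz, cptU_zero hα0, mul_zero]
    linarith
  obtain ⟨j₁, ⟨hj₁1, hj₁Np⟩, hj₁pos⟩ := hexj
  have hBpos : 0 < B := by
    rw [hBdef]
    exact lt_of_lt_of_le hj₁pos (Finset.single_le_sum (f := fun j => wp j)
      (fun j hj => hwpnn j (Finset.mem_Icc.mp hj).1 (Finset.mem_Icc.mp hj).2)
      (Finset.mem_Icc.mpr ⟨hj₁1, hj₁Np⟩))
  -- least index with loss strictly above wmin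
  have hexi : ∃ i', (1 ≤ i' ∧ i' ≤ Nm) ∧ wmin < wm i' := ⟨iw, ⟨hiw1, hiwNm⟩, hiwgt⟩
  obtain ⟨i₀, ⟨⟨hi₀1, hi₀Nm⟩, hi₀gt⟩, hi₀min⟩ :
      ∃ i', ((1 ≤ i' ∧ i' ≤ Nm) ∧ wmin < wm i') ∧
        ∀ i'' < i', ¬((1 ≤ i'' ∧ i'' ≤ Nm) ∧ wmin < wm i'') :=
    ⟨Nat.find hexi, Nat.find_spec hexi, fun i'' h => Nat.find_min hexi h⟩
  have hprefix : ∀ i', 1 ≤ i' → i' < i₀ → wm i' = wmin := by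
    intro i' h1 h2
    have hmin := hi₀min i' h2
    push_neg at hmin
    exact le_antisymm (hmin ⟨h1, by omega⟩) (hwmlb i' h1 (by omega))
  -- greatest index of the block of equal values
  obtain ⟨k₀, hk₀P, hk₀ge, hk₀le, hk₀gr⟩ :
      ∃ k, wm k = wm i₀ ∧ i₀ ≤ k ∧ k ≤ Nm ∧ ∀ j, k < j → j ≤ Nm → ¬(wm j = wm i₀) :=
    ⟨Nat.findGreatest (fun j => wm j = wm i₀) Nm,
     Nat.findGreatest_spec (P := fun j => wm j = wm i₀) hi₀Nm rfl,
     Nat.le_findGreatest (P := fun j => wm j = wm i₀) hi₀Nm rfl,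
     Nat.findGreatest_le Nm,
     fun j h1 h2 => Nat.findGreatest_is_greatest h1 h2⟩
  have hblockval : ∀ i', i₀ ≤ i' → i' ≤ k₀ → wm i' = wm i₀ :=
    fun i' h1 h2 => le_antisymm (hk₀P ▸ hwmchain i' k₀ (by omega) h2 hk₀le)
      (hwmchain i₀ i' hi₀1 h1 (by omega))
  have hafter : ∀ i', k₀ < i' → i' ≤ Nm → wm i₀ < wm i' := by
    intro i' h1 h2
    exact lt_of_le_of_ne (hwmchain i₀ i' hi₀1 (by omega) h2)
      (fun h => hk₀gr i' h1 h2 h.symm)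
  set V : ℝ := -(wm i₀) with hVdef
  set Vb : ℝ := -wmin with hVbdef
  have hV0 : 0 < V := by
    have := hwmneg i₀ hi₀1 hi₀Nm
    rw [hVdef]; linarith
  have hVVb : V < Vb := by rw [hVdef, hVbdef]; linarith
  have hVb0 : 0 < Vb := by rw [hVbdef]; linarith
  set a' : ℝ := if k₀ = Nm then 0 else -(wm (k₀+1)) with ha'def
  clear_value V Vb a'
  have ha'0 : 0 ≤ a' := by
    rw [ha'def]
    split
    · exact le_rfl
    · next h =>
      have := (hwmneg (k₀+1) (by omega) (by omega)).le
      linarith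
  have ha'V : a' < V := by
    rw [ha'def]
    split
    · exact hV0
    · next h =>
      have := hafter (k₀+1) (by omega) (by omega)
      rw [hVdef]; linarith
  set blockS := Icc i₀ k₀ with hblockdef
  set restS := Icc 1 Nm \ Icc i₀ k₀ with hrestdef
  have hblocksub : blockS ⊆ Icc 1 Nm := Finset.Icc_subset_Icc (by omega) (by omega)
  set Λ := lam * ∑ i' ∈ blockS, lossW Wm N i' with hΛdef
  have hΛpos : 0 < Λ := by
    rw [hΛdef]
    apply mul_pos hlam
    apply Finset.sum_pos
    · intro i' hi'
      have := hblocksub hi'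
      rw [Finset.mem_Icc] at this
      exact hlw i' this.1 this.2
    · exact ⟨i₀, Finset.mem_Icc.mpr ⟨le_rfl, hk₀ge⟩⟩
  set R := -∑ i' ∈ restS, lossW Wm N i' * cptU α β lam (wm i') with hRdef
  have hrest_nonpos : ∀ i' ∈ restS, lossW Wm N i' * cptU α β lam (wm i') ≤ 0 := by
    intro i' hi'
    exact hLterms i' (Finset.mem_sdiff.mp hi').1
  have hR0 : 0 ≤ R := by
    rw [hRdef, neg_nonneg]
    exact Finset.sum_nonpos hrest_nonpos
  clear_value Λ R
  have hlosssum : ∀ V' : ℝ, 0 ≤ V' →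
      ∑ i' ∈ Icc 1 Nm, lossW Wm N i' * cptU α β lam
        (if i₀ ≤ i' ∧ i' ≤ k₀ then -V' else wm i') = -R - Λ * V' ^ β := by
    intro V' hV'
    rw [← Finset.sum_sdiff hblocksub]
    have t1 : ∑ i' ∈ restS, lossW Wm N i' * cptU α β lam
        (if i₀ ≤ i' ∧ i' ≤ k₀ then -V' else wm i') = -R := by
      rw [hRdef, neg_neg]
      apply Finset.sum_congr rfl
      intro i' hi'
      have hnb := (Finset.mem_sdiff.mp hi').2
      rw [if_neg (fun hc => hnb (Finset.mem_Icc.mpr hc))]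
    have t2 : ∑ i' ∈ blockS, lossW Wm N i' * cptU α β lam
        (if i₀ ≤ i' ∧ i' ≤ k₀ then -V' else wm i') = -(Λ * V' ^ β) := by
      have e : ∀ i' ∈ blockS, lossW Wm N i' * cptU α β lam
          (if i₀ ≤ i' ∧ i' ≤ k₀ then -V' else wm i')
          = lossW Wm N i' * (-(lam * V' ^ β)) := by
        intro i' hi'
        rw [hblockdef, Finset.mem_Icc] at hi'
        rw [if_pos hi', cptU_of_neg_arg hα0 hβ0 hV']
      rw [Finset.sum_congr rfl e, ← Finset.sum_mul, hΛdef]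
      ring
    rw [t1, t2]
    ring
  have hcur : R + Λ * V ^ β = -L := by
    have h1 := hlosssum V hV0.le
    have h2 : ∑ i' ∈ Icc 1 Nm, lossW Wm N i' * cptU α β lam
        (if i₀ ≤ i' ∧ i' ≤ k₀ then -V else wm i')
        = ∑ i' ∈ Icc 1 Nm, lossW Wm N i' * cptU α β lam (wm i') := by
      apply Finset.sum_congr rfl
      intro i' _
      congr 1
      split
      · next h => rw [hblockval i' h.1 h.2, hVdef, neg_neg]
      · rfl
    rw [h2, ← hLdef] at h1
    linarith
  have hRVG : R + Λ * V ^ β ≤ G := by rw [hcur]; linarith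
  have hRV0 : (0:ℝ) < R + Λ * V ^ β := by rw [hcur]; linarith
  set g : ℝ → ℝ := fun V' => (R + Λ * V' ^ β) ^ (1/α) with hgdef
  set Gp := G ^ (1/α) with hGpdef
  have hGp : 0 < Gp := Real.rpow_pos_of_pos hGpos _
  set M := ∑ i' ∈ restS, (-(wm i')) with hMdef
  set κ : ℝ := (blockS.card : ℝ) with hκdef
  -- the one-parameter family of feasible lotteries
  have hmem : ∀ V' : ℝ, a' ≤ V' → V' ≤ Vb →
      (M + κ * V' - (B / Gp) * g V') ∈ {S : ℝ | ∃ wm' wp' : ℕ → ℝ,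
        PLotFeasible Wm Wp N α β lam wmin Nm Np wm' wp' ∧ S = LotObj Nm Np wm' wp'} := by
    intro V' ha'V' hV'Vb
    have hV'0 : 0 ≤ V' := ha'0.trans ha'V'
    have hu0 : 0 ≤ R + Λ * V' ^ β :=
      add_nonneg hR0 (mul_nonneg hΛpos.le (Real.rpow_nonneg hV'0 β))
    have hfr0 : 0 ≤ (R + Λ * V' ^ β) / G := div_nonneg hu0 hGpos.le
    set s' := ((R + Λ * V' ^ β) / G) ^ (1/α) with hs'def
    have hs'0 : 0 ≤ s' := Real.rpow_nonneg hfr0 _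
    have hs'a : s' ^ α = (R + Λ * V' ^ β) / G := by
      rw [hs'def, ← Real.rpow_mul hfr0, one_div, inv_mul_cancel₀ hα0.ne', Real.rpow_one]
    set wmf : ℕ → ℝ := fun i' => if i₀ ≤ i' ∧ i' ≤ k₀ then -V' else wm i' with hwmf
    have hgains : ∑ j ∈ Icc 1 Np, gainW Wp N Np j * cptU α β lam (s' * wp j)
        = s' ^ α * G := by
      rw [hGdef, Finset.mul_sum]
      apply Finset.sum_congr rfl
      intro j hj
      rw [Finset.mem_Icc] at hj
      rw [cptU_smul hs'0 (hwpnn j hj.1 hj.2)]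
      ring
    refine ⟨wmf, fun j => s' * wp j, ⟨⟨?_, ?_, ?_, ?_, ?_⟩, ?_⟩, ?_⟩
    · show 0 ≤ (∑ i' ∈ Icc 1 Nm, lossW Wm N i' * cptU α β lam (wmf i')) +
        ∑ j ∈ Icc 1 Np, gainW Wp N Np j * cptU α β lam (s' * wp j)
      have hl : ∑ i' ∈ Icc 1 Nm, lossW Wm N i' * cptU α β lam (wmf i')
          = -R - Λ * V' ^ β := by
        simp only [hwmf]
        exact hlosssum V' hV'0
      rw [hl, hgains, hs'a, div_mul_cancel₀ _ hGpos.ne']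
      linarith
    · intro hNp1
      exact mul_nonneg hs'0 (hwp1 hNp1)
    · intro j hj
      exact mul_le_mul_of_nonneg_left (hwpmono j hj) hs'0
    · intro h
      show wmf Nm ≤ 0
      simp only [hwmf]
      split
      · linarith
      · exact (hwmneg Nm hNm1 le_rfl).le
    · intro i' hi'
      rw [Finset.mem_Icc] at hi'
      show wmf i' ≤ wmf (i' + 1)
      simp only [hwmf]
      by_cases c1 : i₀ ≤ i' ∧ i' ≤ k₀ <;> by_cases c2 : i₀ ≤ i' + 1 ∧ i' + 1 ≤ k₀
      · rw [if_pos c1, if_pos c2]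
      · rw [if_pos c1, if_neg c2]
        have hieq : i' = k₀ := by omega
        have hk₀Nm : k₀ ≠ Nm := by omega
        rw [ha'def, if_neg hk₀Nm] at ha'V'
        rw [hieq]
        linarith
      · rw [if_neg c1, if_pos c2]
        have hpre : wm i' = wmin := hprefix i' (by omega) (by omega)
        rw [hpre, hVbdef] at *
        linarith
      · rw [if_neg c1, if_neg c2]
        exact hwmmono i' (Finset.mem_Icc.mpr hi')
    · intro h
      show wmin ≤ wmf 1
      simp only [hwmf]
      split
      · rw [hVbdef] at hV'Vb
        linarith
      · exact hwm1 h
    · show M + κ * V' - (B / Gp) * g V'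
        = (∑ i' ∈ Icc 1 Nm, (-(wmf i'))) - ∑ j ∈ Icc 1 Np, (s' * wp j)
      have e1 : ∑ i' ∈ Icc 1 Nm, (-(wmf i')) = M + κ * V' := by
        simp only [hwmf]
        rw [← Finset.sum_sdiff hblocksub]
        have t1 : ∑ i' ∈ restS, (-(if i₀ ≤ i' ∧ i' ≤ k₀ then -V' else wm i')) = M := by
          rw [hMdef]
          apply Finset.sum_congr rfl
          intro i' hi'
          have hnb := (Finset.mem_sdiff.mp hi').2
          rw [if_neg (fun hc => hnb (Finset.mem_Icc.mpr hc))]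
        have t2 : ∑ i' ∈ blockS, (-(if i₀ ≤ i' ∧ i' ≤ k₀ then -V' else wm i'))
            = κ * V' := by
          have e : ∀ i' ∈ blockS, (-(if i₀ ≤ i' ∧ i' ≤ k₀ then -V' else wm i')) = V' := by
            intro i' hi'
            rw [hblockdef, Finset.mem_Icc] at hi'
            rw [if_pos hi', neg_neg]
          rw [Finset.sum_congr rfl e, Finset.sum_const, nsmul_eq_mul, hκdef]
        rw [t1, t2]
      have e2 : ∑ j ∈ Icc 1 Np, (s' * wp j) = s' * B := by
        rw [hBdef, Finset.mul_sum]
      have e3 : s' = g V' / Gp := by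
        rw [hs'def, hgdef, hGpdef, Real.div_rpow hu0 hGpos.le]
      rw [e1, e2, e3]
      ring
  -- value of the current lottery in family form
  have hCsplit : ∑ i' ∈ Icc 1 Nm, (-(wm i')) = M + κ * V := by
    rw [← Finset.sum_sdiff hblocksub]
    have t1 : ∑ i' ∈ restS, (-(wm i')) = M := hMdef.symm
    have t2 : ∑ i' ∈ blockS, (-(wm i')) = κ * V := by
      have e : ∀ i' ∈ blockS, (-(wm i')) = V := by
        intro i' hi'
        rw [hblockdef, Finset.mem_Icc] at hi'
        rw [hblockval i' hi'.1 hi'.2, hVdef]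
      rw [Finset.sum_congr rfl e, Finset.sum_const, nsmul_eq_mul, hκdef]
    rw [t1, t2]
  have hPieq : Pistar = M + κ * V - B := by
    rw [← hobj, hCsplit]
  have hgV_le : g V ≤ Gp := by
    rw [hgdef, hGpdef]
    exact Real.rpow_le_rpow (by linarith) hRVG (by positivity)
  have hψV_ge : Pistar ≤ M + κ * V - (B / Gp) * g V := by
    have h1 : (B / Gp) * g V ≤ B := by
      calc (B / Gp) * g V ≤ (B / Gp) * Gp :=
            mul_le_mul_of_nonneg_left hgV_le (div_nonneg hBpos.le hGp.le)
        _ = B := div_mul_cancel₀ B hGp.ne'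
    linarith [hPieq]
  have hψa : M + κ * a' - (B / Gp) * g a' ≤ Pistar :=
    hopt.2 (hmem a' le_rfl (by linarith))
  have hψb : M + κ * Vb - (B / Gp) * g Vb ≤ Pistar :=
    hopt.2 (hmem Vb (by linarith) le_rfl)
  have hcpos : 0 < B / Gp := div_pos hBpos hGp
  by_cases hstrict : 0 < R ∨ β < α
  · have hconc : StrictConcaveOn ℝ (Set.Ici (0:ℝ)) g := by
      rw [hgdef]
      exact strictConcave_aux hR0 hΛpos hα0 hα1 hβ0 hβα hstrict
    have hba' : 0 < Vb - a' := by linarith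
    set θ := (Vb - V)/(Vb - a') with hθdef
    set τ := (V - a')/(Vb - a') with hτdef
    have hθ0 : 0 < θ := div_pos (by linarith) hba'
    have hτ0 : 0 < τ := div_pos (by linarith) hba'
    have hθτ : θ + τ = 1 := by
      rw [hθdef, hτdef]
      field_simp
      ring
    have hVcomb : θ * a' + τ * Vb = V := by
      rw [hθdef, hτdef]
      field_simp
      ring
    have hlt := hconc.2 (Set.mem_Ici.mpr ha'0) (Set.mem_Ici.mpr hVb0.le)
      (by intro h; rw [h] at ha'V; linarith) hθ0 hτ0 hθτ
    rw [smul_eq_mul, smul_eq_mul, smul_eq_mul, smul_eq_mul, hVcomb] at hlt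
    have hcomb : θ * (M + κ * a' - (B/Gp) * g a') + τ * (M + κ * Vb - (B/Gp) * g Vb)
        = M + κ * V - (B/Gp) * (θ * g a' + τ * g Vb) := by
      linear_combination M * hθτ + κ * hVcomb
    have m1 : θ * (M + κ * a' - (B/Gp) * g a') ≤ θ * Pistar :=
      mul_le_mul_of_nonneg_left hψa hθ0.le
    have m2 : τ * (M + κ * Vb - (B/Gp) * g Vb) ≤ τ * Pistar :=
      mul_le_mul_of_nonneg_left hψb hτ0.le
    have m3 : θ * Pistar + τ * Pistar = Pistar := by linear_combination Pistar * hθτ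
    have m4 : (B/Gp) * (θ * g a' + τ * g Vb) < (B/Gp) * g V :=
      mul_lt_mul_of_pos_left hlt hcpos
    linarith
  · push_neg at hstrict
    have hReq : R = 0 := le_antisymm hstrict.1 hR0
    have hβeq : β = α := le_antisymm hβα hstrict.2
    have hrestempty : restS = ∅ := by
      by_contra hne'
      obtain ⟨i', hi'⟩ := Finset.nonempty_of_ne_empty hne'
      have hb := Finset.mem_Icc.mp (Finset.mem_sdiff.mp hi').1
      have hterm : lossW Wm N i' * cptU α β lam (wm i') < 0 :=
        mul_neg_of_pos_of_neg (hlw i' hb.1 hb.2) (cptU_neg hlam (hwmneg i' hb.1 hb.2))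
      have hsum0 : ∑ x ∈ restS, lossW Wm N x * cptU α β lam (wm x) = 0 := by
        rw [hRdef] at hReq
        linarith
      have := (Finset.sum_eq_zero_iff_of_nonpos hrest_nonpos).mp hsum0 i' hi'
      linarith
    have hsub : Icc 1 Nm ⊆ Icc i₀ k₀ := by
      rw [← Finset.sdiff_eq_empty_iff_subset]
      exact hrestempty
    have hk₀Nm : k₀ = Nm := by
      have := hsub (Finset.mem_Icc.mpr ⟨hNm1, le_rfl⟩)
      rw [Finset.mem_Icc] at this
      omega
    have hM0 : M = 0 := by rw [hMdef, hrestempty, Finset.sum_empty]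
    have ha'eq : a' = 0 := by rw [ha'def, if_pos hk₀Nm]
    have hglin : ∀ V'' : ℝ, 0 ≤ V'' → g V'' = Λ ^ (1/α) * V'' := by
      intro V'' h
      rw [hgdef]
      simp only [hReq, hβeq, zero_add]
      rw [Real.mul_rpow hΛpos.le (Real.rpow_nonneg h α), ← Real.rpow_mul h,
        mul_one_div_cancel hα0.ne', Real.rpow_one]
    have hh1 : Pistar ≤ (κ - (B/Gp) * Λ ^ (1/α)) * V := by
      have := hψV_ge
      rw [hglin V hV0.le, hM0] at this
      linarith [this]
    have hh2 : (κ - (B/Gp) * Λ ^ (1/α)) * Vb ≤ Pistar := by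
      have := hψb
      rw [hglin Vb hVb0.le, hM0] at this
      linarith [this]
    have hCpos' : 0 < κ - (B/Gp) * Λ ^ (1/α) := by
      rcases le_or_gt (κ - (B/Gp) * Λ ^ (1/α)) 0 with h | h
      · exfalso
        have : (κ - (B/Gp) * Λ ^ (1/α)) * V ≤ 0 := mul_nonpos_of_nonpos_of_nonneg h hV0.le
        linarith
      · exact h
    have : (κ - (B/Gp) * Λ ^ (1/α)) * V < (κ - (B/Gp) * Λ ^ (1/α)) * Vb :=
      mul_lt_mul_of_pos_left hVVb hCpos'
    linarith

end CaseB

/-- for `α ≥ β`, if `(N⁻,N⁺)` attains the maximum profit `Π'* > 0` of the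
price-constrained lottery problems among all splits `n⁻ + n⁺ = N`, then every global
maximizer of `P'(N⁻,N⁺)` satisfies `w⁻_i = w_min` for all `i ∈ {1,…,N⁻}`. -/
theorem price_constrained_losses_at_wmin (Wm Wp : ℝ → ℝ) (N : ℕ) (α β lam wmin : ℝ)
    (Nm Np : ℕ) (Pistar : ℝ)
    (hWm : IsPWF Wm) (hWp : IsPWF Wp)
    (hα0 : 0 < α) (hα1 : α < 1) (hβ0 : 0 < β) (hβ1 : β < 1) (hβα : β ≤ α)
    (hlam : 0 < lam) (hwmin : wmin < 0)
    (hsum : Nm + Np = N)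
    (hopt : IsGreatest {S : ℝ | ∃ wm wp : ℕ → ℝ,
        PLotFeasible Wm Wp N α β lam wmin Nm Np wm wp ∧ S = LotObj Nm Np wm wp} Pistar)
    (hmax : ∀ nm np : ℕ, nm + np = N → ∀ wm wp : ℕ → ℝ,
        PLotFeasible Wm Wp N α β lam wmin nm np wm wp → LotObj nm np wm wp ≤ Pistar)
    (hpos : 0 < Pistar) :
    ∀ wm wp : ℕ → ℝ, PLotFeasible Wm Wp N α β lam wmin Nm Np wm wp →
      LotObj Nm Np wm wp = Pistar →
      ∀ i ∈ Finset.Icc 1 Nm, wm i = wmin := by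
  intro wm wp hfeas hobj i hi
  by_contra hne
  rw [Finset.mem_Icc] at hi
  have hNm1 : 1 ≤ Nm := hi.1.trans hi.2
  have hwmchain := chain_mono hfeas.1.2.2.2.2
  have hwmlb : wmin ≤ wm i := (hfeas.2 hNm1).trans (hwmchain 1 i le_rfl hi.1 hi.2)
  have hiwgt : wmin < wm i := lt_of_le_of_ne hwmlb (Ne.symm hne)
  have h0 : wm Nm ≤ 0 := hfeas.1.2.2.2.1 hNm1
  rcases h0.lt_or_eq with htop | htop
  · exact lottery_caseB Wm Wp N α β lam wmin Nm Np Pistar hWm hWp hα0 hα1 hβ0 hβ1 hβα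
      hlam hwmin hsum hopt hpos wm wp hfeas hobj hNm1 htop i hi.1 hi.2 hiwgt
  · exact lottery_caseA Wm Wp N α β lam wmin Nm Np Pistar hWm hWp hα0 hα1 hβ0
      hlam hsum hmax hpos wm wp hfeas hobj hNm1 htop
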